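/- Let P be a symmetric idempotent real n×n matrix, M a symmetric positive definite real n×n matrix, μ > 0, M̄ = P M P + μ (I − P), Q = I − P, and S = I − M M̄⁻¹ P. Then Q S = S (equivalently P S = 0, so the range of S lies in the orthogonal complement of the range of P) and S Q = Q (so S maps every vector in the range of Q to itself). -/

import Mathlib

open Matrix

/-- With `Q = I - P` and `S = I - M M̄⁻¹ P`, one has `Q S = S` (so the range of `S` lies
in the orthogonal complement of the range of `P`) and `S Q = Q` (so `S` maps every
vector in the range of `Q` to itself). -/
theorem stmt_15 (n : ℕ)
    (P M : Matrix (Fin n) (Fin n) ℝ)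
    (hPsymm : Pᵀ = P) (hPidem : P * P = P)
    (hM : M.PosDef) (μ : ℝ) (hμ : 0 < μ)
    (Q Mbar S : Matrix (Fin n) (Fin n) ℝ)
    (hQ : Q = 1 - P)
    (hMbar : Mbar = P * M * P + μ • ((1 : Matrix (Fin n) (Fin n) ℝ) - P))
    (hS : S = 1 - M * Mbar⁻¹ * P) :
    Q * S = S ∧ S * Q = Q := by
  have hPQ : P * (1 - P) = 0 := by
    rw [mul_sub, mul_one, hPidem, sub_self]
  have hQP : (1 - P) * P = 0 := by
    rw [sub_mul, one_mul, hPidem, sub_self]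
  -- Mbar is positive definite
  have hMsymm : Mᵀ = M := hM.isHermitian.eq
  have hMbarPos : Mbar.PosDef := by
    rw [posDef_iff_dotProduct_mulVec]
    constructor
    · show Mbarᴴ = Mbar
      rw [conjTranspose_eq_transpose_of_trivial, hMbar, transpose_add, transpose_smul,
        transpose_sub, transpose_one, hPsymm, transpose_mul, transpose_mul, hPsymm, hMsymm,
        mul_assoc]
    · intro x hx
      have hstar : (star x : Fin n → ℝ) = x := by simp
      rw [hstar, hMbar, add_mulVec, dotProduct_add, smul_mulVec, dotProduct_smul]
      set y : Fin n → ℝ := P *ᵥ x with hy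
      set z : Fin n → ℝ := (1 - P) *ᵥ x with hz
      have hterm1 : x ⬝ᵥ (P * M * P) *ᵥ x = y ⬝ᵥ M *ᵥ y := by
        rw [← mulVec_mulVec, ← mulVec_mulVec, dotProduct_mulVec x P,
          ← mulVec_transpose, hPsymm]
      have hterm2 : x ⬝ᵥ (1 - P) *ᵥ x = z ⬝ᵥ z := by
        have hyz : y ⬝ᵥ z = 0 := by
          have ht : (1 - P)ᵀ = 1 - P := by rw [transpose_sub, transpose_one, hPsymm]
          rw [hy, hz, dotProduct_mulVec, ← mulVec_transpose, ht, mulVec_mulVec, hQP,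
            zero_mulVec, zero_dotProduct]
        have hxyz : x = y + z := by
          rw [hy, hz, ← add_mulVec]
          simp
        calc x ⬝ᵥ (1 - P) *ᵥ x = (y + z) ⬝ᵥ z := by rw [← hxyz, hz]
          _ = y ⬝ᵥ z + z ⬝ᵥ z := add_dotProduct y z z
          _ = z ⬝ᵥ z := by rw [hyz, zero_add]
      rw [hterm1, hterm2]
      by_cases hyzero : y = 0
      · have hzne : z ≠ 0 := by
          intro hz0
          apply hx
          have : x = y + z := by rw [hy, hz, ← add_mulVec]; simp
          rw [this, hyzero, hz0, add_zero]
        have h1 : y ⬝ᵥ M *ᵥ y = 0 := by rw [hyzero]; simp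
        have h2 : (0 : ℝ) < z ⬝ᵥ z := by
          have := dotProduct_star_self_pos_iff (v := z)
          simp only [star_trivial] at this
          exact this.mpr hzne
        rw [h1, zero_add]
        exact mul_pos hμ h2
      · have h1 : (0 : ℝ) < y ⬝ᵥ M *ᵥ y := by
          have := hM.dotProduct_mulVec_pos hyzero
          simpa using this
        have h2 : (0 : ℝ) ≤ z ⬝ᵥ z := by
          have := dotProduct_star_self_nonneg z
          simpa using this
        have h3 : (0 : ℝ) ≤ μ * (z ⬝ᵥ z) := mul_nonneg hμ.le h2
        simp only [smul_eq_mul]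
        linarith
  have hUnit : IsUnit Mbar := hMbarPos.isUnit
  have hMbarInv : Mbar * Mbar⁻¹ = 1 := mul_nonsing_inv _ (isUnit_iff_isUnit_det _ |>.mp hUnit)
  have hInvMbar : Mbar⁻¹ * Mbar = 1 := nonsing_inv_mul _ (isUnit_iff_isUnit_det _ |>.mp hUnit)
  -- key algebraic identities
  have hMbarP : Mbar * P = P * M * P := by
    rw [hMbar, add_mul, smul_mul_assoc, hQP, smul_zero, add_zero, mul_assoc, mul_assoc,
      hPidem, ← mul_assoc]
  have hPMbar : P * Mbar = P * M * P := by
    rw [hMbar, mul_add, mul_smul_comm, hPQ, smul_zero, add_zero, ← mul_assoc, ← mul_assoc,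
      hPidem]
  have hcomm : Mbar⁻¹ * P = P * Mbar⁻¹ := by
    calc Mbar⁻¹ * P = Mbar⁻¹ * P * (Mbar * Mbar⁻¹) := by rw [hMbarInv, mul_one]
      _ = Mbar⁻¹ * (P * Mbar) * Mbar⁻¹ := by rw [← mul_assoc, ← mul_assoc, mul_assoc Mbar⁻¹ P]
      _ = Mbar⁻¹ * (Mbar * P) * Mbar⁻¹ := by rw [hPMbar, hMbarP]
      _ = P * Mbar⁻¹ := by rw [← mul_assoc, mul_assoc Mbar⁻¹, ← mul_assoc Mbar⁻¹, hInvMbar,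
            one_mul]
  have hQMbarInv : (1 - P) * Mbar⁻¹ = μ⁻¹ • (1 - P) := by
    have hQMbar : (1 - P) * Mbar = μ • (1 - P) := by
      have h0 : (1 - P) * (P * M * P) = 0 := by
        rw [show P * M * P = P * (M * P) from by rw [mul_assoc], ← mul_assoc, hQP, zero_mul]
      have hQQ : (1 - P) * (1 - P) = 1 - P := by rw [mul_sub, mul_one, hQP, sub_zero]
      rw [hMbar, mul_add, h0, zero_add, mul_smul_comm, hQQ]
    calc (1 - P) * Mbar⁻¹ = μ⁻¹ • ((μ • (1 - P)) * Mbar⁻¹) := by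
          rw [smul_mul_assoc, smul_smul, inv_mul_cancel₀ hμ.ne', one_smul]
      _ = μ⁻¹ • ((1 - P) * Mbar * Mbar⁻¹) := by rw [hQMbar]
      _ = μ⁻¹ • (1 - P) := by rw [mul_assoc, hMbarInv, mul_one]
  -- P * S = 0
  have hPS : P * S = 0 := by
    have key : P * M * Mbar⁻¹ * P = P := by
      calc P * M * Mbar⁻¹ * P = P * M * (Mbar⁻¹ * P) := by rw [mul_assoc]
        _ = P * M * P * Mbar⁻¹ := by rw [hcomm, ← mul_assoc]
        _ = (Mbar - μ • (1 - P)) * Mbar⁻¹ := by rw [hMbar, add_sub_cancel_right]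
        _ = Mbar * Mbar⁻¹ - μ • ((1 - P) * Mbar⁻¹) := by rw [sub_mul, smul_mul_assoc]
        _ = 1 - μ • (μ⁻¹ • (1 - P)) := by rw [hMbarInv, hQMbarInv]
        _ = 1 - (1 - P) := by rw [smul_smul, mul_inv_cancel₀ hμ.ne', one_smul]
        _ = P := sub_sub_cancel 1 P
    rw [hS, mul_sub, mul_one, ← mul_assoc, ← mul_assoc, key, sub_self]
  constructor
  · rw [hQ, sub_mul, one_mul, hPS, sub_zero]
  · rw [hS, hQ, sub_mul, one_mul, mul_assoc, hPQ, mul_zero, sub_zero]
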